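/- Let d = 1, n = 2, η(x_1,x_2) = (x_1-x_2, (x_1-x_2)(x_1+x_2), (x_1-x_2)(x_1²+x_2²)), and f(x_1,x_2) = x_1^{4/3} - x_2^{4/3} on [-1,1]² (with t^{4/3} interpreted as sign-preserving or |t|^{4/3}). Then there is no continuously differentiable function g : ℝ³ → ℝ with f = g ∘ η on [-1,1]². -/

import Mathlib

set_option maxHeartbeats 1000000

lemma norm_symm3 (u : Fin 3 → ℝ) :
    ‖(WithLp.equiv 2 (Fin 3 → ℝ)).symm u‖ = Real.sqrt (u 0 ^ 2 + u 1 ^ 2 + u 2 ^ 2) := by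
  rw [EuclideanSpace.norm_eq]
  simp [Fin.sum_univ_three, WithLp.equiv_symm_apply, PiLp.toLp_apply, Real.norm_eq_abs, sq_abs]

/-- Counterexample for continuous differentiability: for `f(x₁,x₂) = |x₁|^{4/3} - |x₂|^{4/3}`
and the explicit `η`, there is no `C¹` function `g : ℝ³ → ℝ` with `f = g ∘ η` on `[-1,1]²`. -/
theorem counterexample_C1
    (η : ℝ × ℝ → EuclideanSpace ℝ (Fin 3))
    (hη : ∀ x : ℝ × ℝ, η x = (WithLp.equiv 2 (Fin 3 → ℝ)).symm
      ![x.1 - x.2, (x.1 - x.2) * (x.1 + x.2), (x.1 - x.2) * (x.1 ^ 2 + x.2 ^ 2)])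
    (f : ℝ × ℝ → ℝ) (hf : ∀ x : ℝ × ℝ, f x = |x.1| ^ ((4 : ℝ) / 3) - |x.2| ^ ((4 : ℝ) / 3))
    (D : Set (ℝ × ℝ)) (hD : D = Set.Icc (-1 : ℝ) 1 ×ˢ Set.Icc (-1 : ℝ) 1) :
    ¬∃ g : EuclideanSpace ℝ (Fin 3) → ℝ, ContDiff ℝ 1 g ∧ ∀ x ∈ D, g (η x) = f x := by
  rintro ⟨g, hg, hgf⟩
  obtain ⟨K, t, ht, hK⟩ := (hg.contDiffAt (x := 0)).exists_lipschitzOnWith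
  obtain ⟨δ, hδ, hball⟩ := Metric.mem_nhds_iff.mp ht
  set c : ℝ := 2 / (6 * (K : ℝ) + 1) with hc
  have hKnn : (0 : ℝ) ≤ (K : ℝ) := K.coe_nonneg
  have hcpos : 0 < c := by positivity
  have hcp : 0 < c ^ ((3 : ℝ) / 2) := Real.rpow_pos_of_pos hcpos _
  set ε : ℝ := min (1/2) (min (δ/20) (c ^ ((3:ℝ)/2) / 2)) with hεdef
  have hεpos : 0 < ε := by
    apply lt_min (by norm_num)
    exact lt_min (by positivity) (by positivity)
  have hεhalf : ε ≤ 1/2 := min_le_left _ _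
  have hεle1 : ε ≤ 1 := by linarith
  have hp24 : ε^4 ≤ ε^2 := pow_le_pow_of_le_one hεpos.le hεle1 (by norm_num)
  have hp26 : ε^6 ≤ ε^2 := pow_le_pow_of_le_one hεpos.le hεle1 (by norm_num)
  have hp46 : ε^6 ≤ ε^4 := pow_le_pow_of_le_one hεpos.le hεle1 (by norm_num)
  have hεδ : ε ≤ δ/20 := le_trans (min_le_right _ _) (min_le_left _ _)
  have hεc : ε < c ^ ((3:ℝ)/2) :=
    lt_of_le_of_lt (le_trans (min_le_right _ _) (min_le_right _ _)) (by linarith)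
  -- points
  set a : EuclideanSpace ℝ (Fin 3) := η (2*ε, 0) with ha
  set b : EuclideanSpace ℝ (Fin 3) := η (ε, -ε) with hb
  -- membership in t
  have hna : ‖a‖ ≤ 10 * ε := by
    rw [ha, hη, norm_symm3]
    simp only [Matrix.cons_val_zero, Matrix.cons_val_one, Matrix.head_cons,
      Matrix.cons_val_two, Matrix.tail_cons]
    have h1 : (2*ε - 0)^2 + ((2*ε - 0)*(2*ε + 0))^2 + ((2*ε - 0)*((2*ε)^2 + 0^2))^2
        ≤ (10*ε)^2 := by nlinarith [hp24, hp26, sq_nonneg ε]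
    calc Real.sqrt ((2*ε - 0)^2 + ((2*ε - 0)*(2*ε + 0))^2 + ((2*ε - 0)*((2*ε)^2 + 0^2))^2)
        ≤ Real.sqrt ((10*ε)^2) := Real.sqrt_le_sqrt h1
      _ = 10*ε := Real.sqrt_sq (by positivity)
  have hnb : ‖b‖ ≤ 10 * ε := by
    rw [hb, hη, norm_symm3]
    simp only [Matrix.cons_val_zero, Matrix.cons_val_one, Matrix.head_cons,
      Matrix.cons_val_two, Matrix.tail_cons]
    have h1 : (ε - -ε)^2 + ((ε - -ε)*(ε + -ε))^2 + ((ε - -ε)*(ε^2 + (-ε)^2))^2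
        ≤ (10*ε)^2 := by nlinarith [hp24, hp26, sq_nonneg ε]
    calc Real.sqrt ((ε - -ε)^2 + ((ε - -ε)*(ε + -ε))^2 + ((ε - -ε)*(ε^2 + (-ε)^2))^2)
        ≤ Real.sqrt ((10*ε)^2) := Real.sqrt_le_sqrt h1
      _ = 10*ε := Real.sqrt_sq (by positivity)
  have hat : a ∈ t := hball (by
    rw [Metric.mem_ball, dist_zero_right]; linarith)
  have hbt : b ∈ t := hball (by
    rw [Metric.mem_ball, dist_zero_right]; linarith)
  -- distance bound
  have hdab : dist a b ≤ 6 * ε^2 := by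
    rw [dist_eq_norm, ha, hb, hη, hη, WithLp.equiv_symm_apply, ← WithLp.toLp_sub, ← WithLp.equiv_symm_apply, norm_symm3]
    simp only [Pi.sub_apply, Matrix.cons_val_zero, Matrix.cons_val_one, Matrix.head_cons,
      Matrix.cons_val_two, Matrix.tail_cons]
    have h1 : ((2*ε - 0) - (ε - -ε))^2
        + ((2*ε - 0)*(2*ε + 0) - (ε - -ε)*(ε + -ε))^2
        + ((2*ε - 0)*((2*ε)^2 + 0^2) - (ε - -ε)*(ε^2 + (-ε)^2))^2
        ≤ (6*ε^2)^2 := by nlinarith [hp46, sq_nonneg ε, sq_nonneg (ε*ε)]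
    calc Real.sqrt _ ≤ Real.sqrt ((6*ε^2)^2) := Real.sqrt_le_sqrt h1
      _ = 6*ε^2 := Real.sqrt_sq (by positivity)
  -- values of g
  have hmemA : ((2*ε, 0) : ℝ × ℝ) ∈ D := by
    rw [hD]; constructor <;> constructor <;> simp <;> linarith
  have hmemB : ((ε, -ε) : ℝ × ℝ) ∈ D := by
    rw [hD]; constructor <;> constructor <;> simp <;> linarith
  have hga : g a = (2*ε) ^ ((4:ℝ)/3) := by
    rw [ha, hgf _ hmemA, hf]
    simp only
    rw [abs_of_nonneg (by linarith), abs_zero, Real.zero_rpow (by norm_num), sub_zero]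
  have hgb : g b = 0 := by
    rw [hb, hgf _ hmemB, hf]
    simp only
    rw [abs_neg, sub_self]
  -- Lipschitz estimate
  have hlip : dist (g a) (g b) ≤ K * dist a b := hK.dist_le_mul a hat b hbt
  have hval : dist (g a) (g b) = (2*ε) ^ ((4:ℝ)/3) := by
    rw [hga, hgb, Real.dist_eq, sub_zero, abs_of_nonneg (Real.rpow_nonneg (by linarith) _)]
  have hrw : (2*ε) ^ ((4:ℝ)/3) = 2 ^ ((4:ℝ)/3) * ε ^ ((4:ℝ)/3) :=
    Real.mul_rpow (by norm_num) hεpos.le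
  have h2le : (2:ℝ) ≤ 2 ^ ((4:ℝ)/3) := by
    calc (2:ℝ) = 2 ^ (1:ℝ) := (Real.rpow_one 2).symm
      _ ≤ 2 ^ ((4:ℝ)/3) := Real.rpow_le_rpow_of_exponent_le (by norm_num) (by norm_num)
  have hεr : 0 < ε ^ ((4:ℝ)/3) := Real.rpow_pos_of_pos hεpos _
  have hsplit : ε^2 = ε ^ ((4:ℝ)/3) * ε ^ ((2:ℝ)/3) := by
    rw [← Real.rpow_natCast ε 2, ← Real.rpow_add hεpos]
    norm_num
  have key : 2 * ε ^ ((4:ℝ)/3) ≤ (K:ℝ) * (6 * (ε ^ ((4:ℝ)/3) * ε ^ ((2:ℝ)/3))) := by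
    have h1 : 2 * ε ^ ((4:ℝ)/3) ≤ (2*ε) ^ ((4:ℝ)/3) := by
      rw [hrw]; exact mul_le_mul_of_nonneg_right h2le hεr.le
    have h2 : (K:ℝ) * dist a b ≤ (K:ℝ) * (6 * ε^2) :=
      mul_le_mul_of_nonneg_left hdab hKnn
    rw [hsplit] at h2
    calc 2 * ε ^ ((4:ℝ)/3) ≤ (2*ε) ^ ((4:ℝ)/3) := h1
      _ = dist (g a) (g b) := hval.symm
      _ ≤ (K:ℝ) * dist a b := hlip
      _ ≤ _ := h2
  have key2 : 2 ≤ 6 * (K:ℝ) * ε ^ ((2:ℝ)/3) := by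
    have h := key
    rw [show (K:ℝ) * (6 * (ε ^ ((4:ℝ)/3) * ε ^ ((2:ℝ)/3)))
        = (6 * (K:ℝ) * ε ^ ((2:ℝ)/3)) * ε ^ ((4:ℝ)/3) by ring,
      show 2 * ε ^ ((4:ℝ)/3) = 2 * ε ^ ((4:ℝ)/3) from rfl] at h
    exact (mul_le_mul_iff_left₀ hεr).mp h
  have hεc2 : ε ^ ((2:ℝ)/3) < c := by
    have h1 : ε ^ ((2:ℝ)/3) < (c ^ ((3:ℝ)/2)) ^ ((2:ℝ)/3) :=
      Real.rpow_lt_rpow hεpos.le hεc (by norm_num)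
    rwa [← Real.rpow_mul hcpos.le, show ((3:ℝ)/2 * (2/3)) = 1 by norm_num,
      Real.rpow_one] at h1
  have hceq : c * (6 * (K:ℝ) + 1) = 2 := by
    rw [hc]; field_simp
  nlinarith [mul_le_mul_of_nonneg_left hεc2.le (by positivity : (0:ℝ) ≤ 6*(K:ℝ)), key2, hceq, hcpos]
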